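/- Let 𝒜 be a gST-automaton without silent transitions in which no transition enters an initial state or leaves an accepting state, and let c be a bad starter transition of dimension n. Then the gST-automaton 𝒜_c satisfies: (1) L(𝒜_c) = L(𝒜); (2) bst_n(𝒜_c) = bst_n(𝒜) − 1; (3) bst_k(𝒜_c) = bst_k(𝒜) for all k < n; (4) btt_k(𝒜_c) = btt_k(𝒜) for all k. -/

import Mathlib

open scoped Classical

namespace HDA

/-! ### Ipomsets over a fixed alphabet -/

structure PreIpomset (σ : Type) : Type 1 where
  carrier : Type
  fin : Finite carrier
  lt : carrier → carrier → Prop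
  evord : carrier → carrier → Prop
  S : Set carrier
  T : Set carrier
  lab : carrier → σ

namespace PreIpomset

variable {σ : Type}

/-- The precedence order is empty. -/
def Discrete (P : PreIpomset σ) : Prop := ∀ x y, ¬ P.lt x y

/-- Validity: `lt` is a strict partial order which is an interval order, `evord` is acyclic,
for distinct events exactly one of the four relations holds, sources are minimal and
targets are maximal.  (All ipomsets considered are interval.) -/
structure IsIpomset (P : PreIpomset σ) : Prop where
  lt_trans : ∀ x y z, P.lt x y → P.lt y z → P.lt x z
  lt_irrefl : ∀ x, ¬ P.lt x x
  evord_acyclic : ∀ x, ¬ Relation.TransGen P.evord x x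
  total : ∀ x y : P.carrier, x ≠ y → P.lt x y ∨ P.lt y x ∨ P.evord x y ∨ P.evord y x
  lt_not_evord : ∀ x y, P.lt x y → ¬ P.evord x y ∧ ¬ P.evord y x
  src_min : ∀ x ∈ P.S, ∀ y, ¬ P.lt y x
  tgt_max : ∀ x ∈ P.T, ∀ y, ¬ P.lt x y
  interval : ∀ w x y z, P.lt w x → P.lt y z → P.lt w z ∨ P.lt y x

/-- A conclist: a discrete ipomset with empty interfaces. -/
def IsConclist (P : PreIpomset σ) : Prop :=
  P.IsIpomset ∧ P.Discrete ∧ P.S = ∅ ∧ P.T = ∅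

/-- A starter `⟨U∖A,U,U⟩`. -/
def IsStarter (P : PreIpomset σ) : Prop := P.IsIpomset ∧ P.Discrete ∧ P.T = Set.univ

/-- A terminator `⟨U,U,U∖B⟩`. -/
def IsTerminator (P : PreIpomset σ) : Prop := P.IsIpomset ∧ P.Discrete ∧ P.S = Set.univ

/-- An identity `⟨U,U,U⟩`. -/
def IsIdentityIpomset (P : PreIpomset σ) : Prop :=
  P.IsIpomset ∧ P.Discrete ∧ P.S = Set.univ ∧ P.T = Set.univ

def IsProperStarter (P : PreIpomset σ) : Prop := P.IsStarter ∧ P.S ≠ Set.univ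

def IsProperTerminator (P : PreIpomset σ) : Prop := P.IsTerminator ∧ P.T ≠ Set.univ

/-- Isomorphism of (pre)ipomsets. -/
def Iso (P Q : PreIpomset σ) : Prop :=
  ∃ f : P.carrier ≃ Q.carrier,
    (∀ x y, P.lt x y ↔ Q.lt (f x) (f y)) ∧
    (∀ x y, P.evord x y ↔ Q.evord (f x) (f y)) ∧
    (∀ x, x ∈ P.S ↔ f x ∈ Q.S) ∧
    (∀ x, x ∈ P.T ↔ f x ∈ Q.T) ∧
    (∀ x, Q.lab (f x) = P.lab x)

/-- Restriction to a subset of events, with empty interfaces. -/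
def restrict (P : PreIpomset σ) (K : Set P.carrier) : PreIpomset σ where
  carrier := {x : P.carrier // x ∈ K}
  fin := by haveI := P.fin; exact inferInstance
  lt := fun x y => P.lt x.val y.val
  evord := fun x y => P.evord x.val y.val
  S := ∅
  T := ∅
  lab := fun x => P.lab x.val

/-- The source interface of `P` as a conclist. -/
def srcIface (P : PreIpomset σ) : PreIpomset σ := P.restrict P.S

/-- The target interface of `P` as a conclist. -/
def tgtIface (P : PreIpomset σ) : PreIpomset σ := P.restrict P.T

/-- The underlying conclist (forget interfaces). -/
def conclistOf (P : PreIpomset σ) : PreIpomset σ := { P with S := ∅, T := ∅ }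

/-- The identity ipomset `⟨U,U,U⟩` on the conclist underlying `P`. -/
def idOf (P : PreIpomset σ) : PreIpomset σ := { P with S := Set.univ, T := Set.univ }

/-- The discrete ipomset `⟨S,U,T⟩` on the conclist underlying `P`. -/
def withIfaces (P : PreIpomset σ) (S T : Set P.carrier) : PreIpomset σ :=
  { P with S := S, T := T }

/-- The starter `⟨U∖A,U,U⟩` on the conclist underlying `P`. -/
def starter (P : PreIpomset σ) (A : Set P.carrier) : PreIpomset σ :=
  { P with S := Aᶜ, T := Set.univ }

/-- The terminator `⟨U,U,U∖B⟩` on the conclist underlying `P`. -/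
def terminator (P : PreIpomset σ) (B : Set P.carrier) : PreIpomset σ :=
  { P with S := Set.univ, T := Bᶜ }

/-- A matching `T_P ≅ S_Q`, i.e. an isomorphism of interface conclists
along which `P` and `Q` may be glued. -/
structure Matching (P Q : PreIpomset σ) : Type where
  g : {x : P.carrier // x ∈ P.T} ≃ {y : Q.carrier // y ∈ Q.S}
  evord_iff : ∀ x y, P.evord x.val y.val ↔ Q.evord (g x).val (g y).val
  lab_eq : ∀ x, Q.lab (g x).val = P.lab x.val

def gluePOf (P Q : PreIpomset σ) :
    P.carrier ⊕ {y : Q.carrier // y ∉ Q.S} → Option P.carrier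
  | Sum.inl x => some x
  | Sum.inr _ => none

noncomputable def glueQOf (P Q : PreIpomset σ) (m : Matching P Q) :
    P.carrier ⊕ {y : Q.carrier // y ∉ Q.S} → Option Q.carrier
  | Sum.inl x => if h : x ∈ P.T then some (m.g ⟨x, h⟩).val else none
  | Sum.inr y => some y.val

/-- The gluing `P * Q` along a matching `T_P ≅ S_Q`. -/
noncomputable def glue (P Q : PreIpomset σ) (m : Matching P Q) : PreIpomset σ where
  carrier := P.carrier ⊕ {y : Q.carrier // y ∉ Q.S}
  fin := by haveI := P.fin; haveI := Q.fin; exact inferInstance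
  lt := fun u v =>
    (∃ x x', gluePOf P Q u = some x ∧ gluePOf P Q v = some x' ∧ P.lt x x') ∨
    (∃ y y', glueQOf P Q m u = some y ∧ glueQOf P Q m v = some y' ∧ Q.lt y y') ∨
    ((∃ x, gluePOf P Q u = some x ∧ x ∉ P.T) ∧
     (∃ y, glueQOf P Q m v = some y ∧ y ∉ Q.S))
  evord := fun u v =>
    (∃ x x', gluePOf P Q u = some x ∧ gluePOf P Q v = some x' ∧ P.evord x x') ∨
    (∃ y y', glueQOf P Q m u = some y ∧ glueQOf P Q m v = some y' ∧ Q.evord y y')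
  S := {u | ∃ x, gluePOf P Q u = some x ∧ x ∈ P.S}
  T := {u | ∃ y, glueQOf P Q m u = some y ∧ y ∈ Q.T}
  lab := Sum.elim P.lab fun y => Q.lab y.val

/-- `R` is (isomorphic to) the gluing `P * Q`; in particular `T_P ≅ S_Q`. -/
def GlueRel (P Q R : PreIpomset σ) : Prop :=
  ∃ m : Matching P Q, Iso (glue P Q m) R

/-- A choice of gluing (used when a matching is known to exist). -/
noncomputable def glueChoice (P Q : PreIpomset σ) : PreIpomset σ :=
  if h : Nonempty (Matching P Q) then glue P Q h.some else P

/-- `GluesTo l R`: `R` is the gluing of the nonempty list `l` of ipomsets. -/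
inductive GluesTo : List (PreIpomset σ) → PreIpomset σ → Prop
  | single {P R : PreIpomset σ} : Iso P R → GluesTo [P] R
  | cons {P : PreIpomset σ} {l : List (PreIpomset σ)} {R' R : PreIpomset σ} :
      GluesTo l R' → GlueRel P R' R → GluesTo (P :: l) R

/-- Proper starters and proper terminators alternate. -/
def Alternating (l : List (PreIpomset σ)) : Prop :=
  l.Chain' fun P Q => (IsProperStarter P ∧ IsProperTerminator Q) ∨
    (IsProperTerminator P ∧ IsProperStarter Q)

/-- `l` is a sparse step decomposition of `R`: either a single identity, or an
alternating sequence of proper starters and proper terminators gluing to `R`. -/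
def IsSparseDecomp (l : List (PreIpomset σ)) (R : PreIpomset σ) : Prop :=
  GluesTo l R ∧
  ((∃ I, l = [I] ∧ IsIdentityIpomset I) ∨
   ((∀ P ∈ l, IsProperStarter P ∨ IsProperTerminator P) ∧ Alternating l))

/-- `P ∈ iPoms^q`: the sparse step decomposition of `P` does not end with a
proper starter (i.e. it ends with a terminator or is a single identity). -/
def InQ (P : PreIpomset σ) : Prop :=
  ∃ l, IsSparseDecomp l P ∧ ∀ Q, l.getLast? = some Q → ¬ IsProperStarter Q

end PreIpomset

open PreIpomset

variable {σ : Type}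

/-! ### Languages and rational operations -/

def glueLang (L M : Set (PreIpomset σ)) : Set (PreIpomset σ) :=
  {R | ∃ P ∈ L, ∃ Q ∈ M, GlueRel P Q R}

def powLang (L : Set (PreIpomset σ)) : ℕ → Set (PreIpomset σ)
  | 0 => L
  | n + 1 => glueLang L (powLang L n)

/-- `L⁺ = ⋃_{n ≥ 1} Lⁿ`. -/
def plusLang (L : Set (PreIpomset σ)) : Set (PreIpomset σ) := ⋃ n, powLang L n

/-- Rational languages of (interval) ipomsets: generated from `∅` and singletons
(up to isomorphism) of starters and terminators by union, gluing composition and plus. -/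
inductive Rational : Set (PreIpomset σ) → Prop
  | empty : Rational ∅
  | single {P : PreIpomset σ} : IsStarter P ∨ IsTerminator P → Rational {Q | Iso Q P}
  | union {L M : Set (PreIpomset σ)} : Rational L → Rational M → Rational (L ∪ M)
  | concat {L M : Set (PreIpomset σ)} : Rational L → Rational M → Rational (glueLang L M)
  | plus {L : Set (PreIpomset σ)} : Rational L → Rational (plusLang L)

/-! ### P-automata -/

structure PAutomaton (σ : Type) : Type 1 where
  Q : Type
  E : Type
  src : E → Q
  tgt : E → Q
  lab : E → PreIpomset σ
  mu : Q → PreIpomset σ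
  start : Set Q
  accept : Set Q

namespace PAutomaton

variable {σ : Type}

/-- The axioms of a P-automaton: finite sets of states and transitions, states
labelled by conclists, transitions by interval ipomsets, with
`μ(s(e)) ≅ S_{λ(e)}` and `μ(t(e)) ≅ T_{λ(e)}`. -/
def IsPA (A : PAutomaton σ) : Prop :=
  Finite A.Q ∧ Finite A.E ∧
  (∀ q, (A.mu q).IsConclist) ∧ (∀ e, (A.lab e).IsIpomset) ∧
  (∀ e, Iso (A.lab e).srcIface (A.mu (A.src e))) ∧
  (∀ e, Iso (A.lab e).tgtIface (A.mu (A.tgt e)))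

/-- ST-automaton: every label is a starter or a terminator. -/
def IsST (A : PAutomaton σ) : Prop := ∀ e, IsStarter (A.lab e) ∨ IsTerminator (A.lab e)

/-- gST-automaton: every label is discrete. -/
def IsGST (A : PAutomaton σ) : Prop := ∀ e, (A.lab e).Discrete

/-- No transition is labelled by an identity. -/
def NoSilent (A : PAutomaton σ) : Prop := ∀ e, ¬ IsIdentityIpomset (A.lab e)

/-- A reduced gST-automaton: no silent transitions and conditions (a)–(f). -/
def Reduced (A : PAutomaton σ) : Prop :=
  NoSilent A ∧
  (∀ e, A.tgt e ∉ A.start) ∧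
  (∀ e, A.src e ∉ A.accept) ∧
  (∀ e, (A.lab e).T = Set.univ → A.tgt e ∈ A.accept) ∧
  (∀ e, (A.lab e).S = Set.univ → A.src e ∈ A.start) ∧
  (∀ e e', A.src e ∈ A.start → A.src e' = A.src e → e' = e) ∧
  (∀ e e', A.tgt e ∈ A.accept → A.tgt e' = A.tgt e → e' = e)

/-- Paths in a P-automaton, from a state to a state. -/
inductive Path (A : PAutomaton σ) : A.Q → A.Q → Type
  | nil (q : A.Q) : Path A q q
  | cons (e : A.E) {r : A.Q} (rest : Path A (A.tgt e) r) : Path A (A.src e) r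

/-- The (interval) ipomset recognized by a path, up to isomorphism:
the gluing of the labels of its transitions (an identity for a constant path). -/
inductive Rec {A : PAutomaton σ} : ∀ {p r : A.Q}, Path A p r → PreIpomset σ → Prop
  | nil (q : A.Q) (R : PreIpomset σ) : Iso (A.mu q).idOf R → Rec (Path.nil q) R
  | cons (e : A.E) {r : A.Q} (rest : Path A (A.tgt e) r) {R' R : PreIpomset σ} :
      Rec rest R' → GlueRel (A.lab e) R' R → Rec (Path.cons e rest) R

/-- The language of a P-automaton. -/
def lang (A : PAutomaton σ) : Set (PreIpomset σ) :=
  {R | ∃ p r, ∃ α : Path A p r, p ∈ A.start ∧ r ∈ A.accept ∧ Rec α R}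

/-- Dimension of a transition. -/
noncomputable def dim (A : PAutomaton σ) (e : A.E) : ℕ := Nat.card (A.lab e).carrier

/-- Number of bad starter transitions of dimension `n`. -/
noncomputable def bst (A : PAutomaton σ) (n : ℕ) : ℕ :=
  Nat.card {e : A.E // IsProperStarter (A.lab e) ∧ A.tgt e ∉ A.accept ∧ A.dim e = n}

/-- Number of bad terminator transitions of dimension `n`. -/
noncomputable def btt (A : PAutomaton σ) (n : ℕ) : ℕ :=
  Nat.card {e : A.E // IsProperTerminator (A.lab e) ∧ A.src e ∉ A.start ∧ A.dim e = n}

/-- The automaton `𝒜_c`: remove the starter transition `c`; for every transition `e`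
out of `t(c)` add a transition `e*` from `s(c)` to `t(e)` labelled `λ(c) * λ(e)`. -/
noncomputable def Ac (A : PAutomaton σ) (c : A.E) : PAutomaton σ where
  Q := A.Q
  E := {e : A.E // e ≠ c} ⊕ {e : A.E // A.src e = A.tgt c}
  src := Sum.elim (fun e => A.src e.val) fun _ => A.src c
  tgt := Sum.elim (fun e => A.tgt e.val) fun e => A.tgt e.val
  lab := Sum.elim (fun e => A.lab e.val) fun e => glueChoice (A.lab c) (A.lab e.val)
  mu := A.mu
  start := A.start
  accept := A.accept

/-- Disjoint union of two P-automata. -/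
def sumAut (A B : PAutomaton σ) : PAutomaton σ where
  Q := A.Q ⊕ B.Q
  E := A.E ⊕ B.E
  src := Sum.elim (Sum.inl ∘ A.src) (Sum.inr ∘ B.src)
  tgt := Sum.elim (Sum.inl ∘ A.tgt) (Sum.inr ∘ B.tgt)
  lab := Sum.elim A.lab B.lab
  mu := Sum.elim A.mu B.mu
  start := Sum.inl '' A.start ∪ Sum.inr '' B.start
  accept := Sum.inl '' A.accept ∪ Sum.inr '' B.accept

/-- Concatenation `𝒜 * ℬ`: disjoint union together with identity-labelled transitions
from accepting states of `𝒜` to initial states of `ℬ` with isomorphic state labels. -/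
def concatAut (A B : PAutomaton σ) : PAutomaton σ where
  Q := A.Q ⊕ B.Q
  E := A.E ⊕ B.E ⊕
    {pq : A.Q × B.Q // pq.1 ∈ A.accept ∧ pq.2 ∈ B.start ∧ Iso (A.mu pq.1) (B.mu pq.2)}
  src := Sum.elim (Sum.inl ∘ A.src)
    (Sum.elim (Sum.inr ∘ B.src) fun pq => Sum.inl pq.val.1)
  tgt := Sum.elim (Sum.inl ∘ A.tgt)
    (Sum.elim (Sum.inr ∘ B.tgt) fun pq => Sum.inr pq.val.2)
  lab := Sum.elim A.lab (Sum.elim B.lab fun pq => (A.mu pq.val.1).idOf)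
  mu := Sum.elim A.mu B.mu
  start := Sum.inl '' A.start
  accept := Sum.inr '' B.accept

/-- Kleene plus `𝒜⁺`: add identity-labelled transitions from accepting states
to initial states with isomorphic state labels. -/
def plusAut (A : PAutomaton σ) : PAutomaton σ where
  Q := A.Q
  E := A.E ⊕
    {pq : A.Q × A.Q // pq.1 ∈ A.accept ∧ pq.2 ∈ A.start ∧ Iso (A.mu pq.1) (A.mu pq.2)}
  src := Sum.elim A.src fun pq => pq.val.1
  tgt := Sum.elim A.tgt fun pq => pq.val.2
  lab := Sum.elim A.lab fun pq => (A.mu pq.val.1).idOf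
  mu := A.mu
  start := A.start
  accept := A.accept

end PAutomaton

/-! ### Partial HDAs -/

/-- `g` exhibits `V` as the sub-conclist of `U` obtained by removing the events in `K`. -/
def IsFaceEmbed (U : PreIpomset σ) (K : Set U.carrier) (V : PreIpomset σ)
    (g : V.carrier → U.carrier) : Prop :=
  Function.Injective g ∧ Set.range g = Kᶜ ∧
  (∀ u v, V.evord u v ↔ U.evord (g u) (g v)) ∧
  (∀ u, U.lab (g u) = V.lab u)

/-- The data of a partial higher-dimensional automaton: cells labelled by conclists,
partial face maps, initial and accepting cells. -/
structure PrePHDA (σ : Type) : Type 1 where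
  cell : Type
  ev : cell → PreIpomset σ
  face : (x : cell) → Set (ev x).carrier → Set (ev x).carrier → Option cell
  start : Set cell
  accept : Set cell

namespace PrePHDA

variable {σ : Type}

/-- The lax precubical identity: whenever `δ_{A,B}(x)` and `δ_{C,D}(δ_{A,B}(x))` are
defined, `δ_{A∪C,B∪D}(x)` is defined and equal to the composite. -/
def IsLax (X : PrePHDA σ) : Prop :=
  ∀ x (A B : Set (X.ev x).carrier) y, X.face x A B = some y →
    ∀ g, IsFaceEmbed (X.ev x) (A ∪ B) (X.ev y) g →
      ∀ (C D : Set (X.ev y).carrier) z, X.face y C D = some z →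
        X.face x (A ∪ g '' C) (B ∪ g '' D) = some z

/-- The axioms of a partial HDA. -/
def IsPHDA (X : PrePHDA σ) : Prop :=
  (∀ x, (X.ev x).IsConclist) ∧
  (∀ x, X.face x ∅ ∅ = some x) ∧
  (∀ x A B y, X.face x A B = some y →
    Disjoint A B ∧ ∃ g, IsFaceEmbed (X.ev x) (A ∪ B) (X.ev y) g) ∧
  IsLax X

/-- Strictness: `δ_{C,D} ∘ δ_{A,B} = δ_{A∪C,B∪D}` as partial functions. -/
def IsStrict (X : PrePHDA σ) : Prop :=
  IsPHDA X ∧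
  (∀ x (A B : Set (X.ev x).carrier) y, X.face x A B = some y →
    ∀ g, IsFaceEmbed (X.ev x) (A ∪ B) (X.ev y) g →
      ∀ C D : Set (X.ev y).carrier,
        X.face x (A ∪ g '' C) (B ∪ g '' D) = X.face y C D) ∧
  (∀ x (A B C D : Set (X.ev x).carrier),
    Disjoint (A ∪ C) (B ∪ D) → C ∪ D ⊆ (A ∪ B)ᶜ →
    X.face x A B = none → X.face x (A ∪ C) (B ∪ D) = none)

/-- Paths in a partial HDA: sequences of upsteps and downsteps. -/
inductive Path (X : PrePHDA σ) : X.cell → X.cell → Type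
  | nil (x : X.cell) : Path X x x
  | up {x z : X.cell} (y : X.cell) (A : Set (X.ev y).carrier)
      (h : X.face y A ∅ = some x) (rest : Path X y z) : Path X x z
  | down {z w : X.cell} (y : X.cell) (B : Set (X.ev y).carrier)
      (h : X.face y ∅ B = some z) (rest : Path X z w) : Path X y w

/-- Directions of the steps of a path (`true` = upstep). -/
def Path.dirs {X : PrePHDA σ} : {x z : X.cell} → Path X x z → List Bool
  | _, _, .nil _ => []
  | _, _, .up _ _ _ rest => true :: rest.dirs
  | _, _, .down _ _ _ rest => false :: rest.dirs

/-- A path is sparse if upsteps and downsteps alternate. -/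
def Path.Sparse {X : PrePHDA σ} {x z : X.cell} (α : Path X x z) : Prop :=
  α.dirs.Chain' (· ≠ ·)

/-- Concatenation of paths. -/
def Path.comp {X : PrePHDA σ} : {x y z : X.cell} → Path X x y → Path X y z → Path X x z
  | _, _, _, .nil _, β => β
  | _, _, _, .up y A h rest, β => .up y A h (rest.comp β)
  | _, _, _, .down y B h rest, β => .down y B h (rest.comp β)

/-- The ipomset recognized by a path, up to isomorphism: the gluing of the starters
and terminators of its steps (an identity for a constant path). -/
inductive Rec {X : PrePHDA σ} : ∀ {x z : X.cell}, Path X x z → PreIpomset σ → Prop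
  | nil (x : X.cell) (R : PreIpomset σ) :
      Iso (X.ev x).idOf R → Rec (Path.nil x) R
  | up {x z : X.cell} (y : X.cell) (A : Set (X.ev y).carrier)
      (h : X.face y A ∅ = some x) (rest : Path X y z) {R' R : PreIpomset σ} :
      Rec rest R' → GlueRel ((X.ev y).starter A) R' R → Rec (Path.up y A h rest) R
  | down {z w : X.cell} (y : X.cell) (B : Set (X.ev y).carrier)
      (h : X.face y ∅ B = some z) (rest : Path X z w) {R' R : PreIpomset σ} :
      Rec rest R' → GlueRel ((X.ev y).terminator B) R' R → Rec (Path.down y B h rest) R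

/-- The language of a partial HDA. -/
def lang (X : PrePHDA σ) : Set (PreIpomset σ) :=
  {R | ∃ x z, ∃ α : Path X x z, x ∈ X.start ∧ z ∈ X.accept ∧ Rec α R}

/-- `X(K,P)`: cells reachable from `K` by a path recognizing `P`. -/
def track (X : PrePHDA σ) (K : Set X.cell) (P : PreIpomset σ) : Set X.cell :=
  {x | ∃ s, ∃ α : Path X s x, s ∈ K ∧ Rec α P}

/-- Deterministic partial HDA: at most one initial cell per conclist, and lower
face maps are "injective" in the appropriate sense. -/
def Deterministic (X : PrePHDA σ) : Prop :=
  (∀ x y, x ∈ X.start → y ∈ X.start → Iso (X.ev x) (X.ev y) → x = y) ∧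
  (∀ (y y' : X.cell) (A : Set (X.ev y).carrier) (A' : Set (X.ev y').carrier)
      (x : X.cell), X.face y A ∅ = some x → X.face y' A' ∅ = some x →
    (∃ f : (X.ev y).carrier ≃ (X.ev y').carrier,
      (∀ u v, (X.ev y).evord u v ↔ (X.ev y').evord (f u) (f v)) ∧
      (∀ u, (X.ev y').lab (f u) = (X.ev y).lab u) ∧ f '' A = A') → y = y')

end PrePHDA

/-! ### Relational HDAs -/

/-- The data of a relational HDA: face relations instead of partial face maps. -/
structure PreRHDA (σ : Type) : Type 1 where
  cell : Type
  ev : cell → PreIpomset σ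
  face : (x : cell) → Set (ev x).carrier → Set (ev x).carrier → Set cell
  start : Set cell
  accept : Set cell

namespace PreRHDA

variable {σ : Type}

/-- The axioms of a relational HDA, with the lax precubical identity
`δ_{C,D} ∘ δ_{A,B} ⊆ δ_{A∪C,B∪D}`. -/
def IsRHDA (X : PreRHDA σ) : Prop :=
  (∀ x, (X.ev x).IsConclist) ∧
  (∀ x, X.face x ∅ ∅ = {x}) ∧
  (∀ x A B y, y ∈ X.face x A B →
    Disjoint A B ∧ ∃ g, IsFaceEmbed (X.ev x) (A ∪ B) (X.ev y) g) ∧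
  (∀ x (A B : Set (X.ev x).carrier) y, y ∈ X.face x A B →
    ∀ g, IsFaceEmbed (X.ev x) (A ∪ B) (X.ev y) g →
      ∀ (C D : Set (X.ev y).carrier) z, z ∈ X.face y C D →
        z ∈ X.face x (A ∪ g '' C) (B ∪ g '' D))

/-- Paths in a relational HDA. -/
inductive Path (X : PreRHDA σ) : X.cell → X.cell → Type 1
  | nil (x : X.cell) : Path X x x
  | up {x z : X.cell} (y : X.cell) (A : Set (X.ev y).carrier)
      (h : x ∈ X.face y A ∅) (rest : Path X y z) : Path X x z
  | down {z w : X.cell} (y : X.cell) (B : Set (X.ev y).carrier)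
      (h : z ∈ X.face y ∅ B) (rest : Path X z w) : Path X y w

/-- The ipomset recognized by a path in a relational HDA. -/
inductive Rec {X : PreRHDA σ} : ∀ {x z : X.cell}, Path X x z → PreIpomset σ → Prop
  | nil (x : X.cell) (R : PreIpomset σ) :
      Iso (X.ev x).idOf R → Rec (Path.nil x) R
  | up {x z : X.cell} (y : X.cell) (A : Set (X.ev y).carrier)
      (h : x ∈ X.face y A ∅) (rest : Path X y z) {R' R : PreIpomset σ} :
      Rec rest R' → GlueRel ((X.ev y).starter A) R' R → Rec (Path.up y A h rest) R
  | down {z w : X.cell} (y : X.cell) (B : Set (X.ev y).carrier)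
      (h : z ∈ X.face y ∅ B) (rest : Path X z w) {R' R : PreIpomset σ} :
      Rec rest R' → GlueRel ((X.ev y).terminator B) R' R → Rec (Path.down y B h rest) R

/-- The language of a relational HDA. -/
def lang (X : PreRHDA σ) : Set (PreIpomset σ) :=
  {R | ∃ x z, ∃ α : Path X x z, x ∈ X.start ∧ z ∈ X.accept ∧ Rec α R}

/-- The ST-automaton `ST(X)` of a relational HDA `X`: states are cells, transitions
mimic the starting and terminating of events. -/
def stAut (X : PreRHDA σ) : PAutomaton σ where
  Q := X.cell
  E := (Σ q : X.cell, Σ A : Set (X.ev q).carrier, {p : X.cell // p ∈ X.face q A ∅}) ⊕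
       (Σ q : X.cell, Σ B : Set (X.ev q).carrier, {r : X.cell // r ∈ X.face q ∅ B})
  src := Sum.elim (fun t => t.2.2.val) fun t => t.1
  tgt := Sum.elim (fun t => t.1) fun t => t.2.2.val
  lab := Sum.elim (fun t => (X.ev t.1).starter t.2.1) fun t => (X.ev t.1).terminator t.2.1
  mu := X.ev
  start := X.start
  accept := X.accept

end PreRHDA

/-! ### The partial HDA of a reduced gST-automaton -/

open PAutomaton

/-- The cell representing a state `q` in `X(𝒜)`: `q` is merged with a terminator
transition out of it or a starter transition into it, if such exists. -/
noncomputable def cellOfState (A : PAutomaton σ) (q : A.Q) : A.E ⊕ A.Q :=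
  if h : ∃ e, IsTerminator (A.lab e) ∧ A.src e = q then Sum.inl h.choose
  else if h' : ∃ e, IsStarter (A.lab e) ∧ A.tgt e = q then Sum.inl h'.choose
  else Sum.inr q

/-- `X(𝒜)`: cells are `(Q ⊔ E)/∼`, with the only defined (nontrivial) face maps
`δ⁰_{U∖S}([e]) = [s(e)]` and `δ¹_{U∖T}([e]) = [t(e)]` for `λ(e) = ⟨S,U,T⟩`. -/
noncomputable def XofA (A : PAutomaton σ) : PrePHDA σ where
  cell := A.E ⊕ A.Q
  ev := Sum.elim (fun e => (A.lab e).conclistOf) A.mu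
  face := fun x =>
    match x with
    | Sum.inl e => fun As Bs =>
        if As = ∅ ∧ Bs = ∅ then some (Sum.inl e)
        else if As = (A.lab e).Sᶜ ∧ Bs = ∅ then some (cellOfState A (A.src e))
        else if As = ∅ ∧ Bs = (A.lab e).Tᶜ then some (cellOfState A (A.tgt e))
        else none
    | Sum.inr q => fun As Bs =>
        if As = ∅ ∧ Bs = ∅ then some (Sum.inr q) else none
  start := cellOfState A '' A.start
  accept := cellOfState A '' A.accept

end HDA

namespace HDA

open PreIpomset

namespace PreIpomset
variable {σ : Type}

theorem Iso.refl (P : PreIpomset σ) : Iso P P :=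
  ⟨Equiv.refl _, fun _ _ => Iff.rfl, fun _ _ => Iff.rfl, fun _ => Iff.rfl,
   fun _ => Iff.rfl, fun _ => rfl⟩

theorem Iso.symm {P Q : PreIpomset σ} (h : Iso P Q) : Iso Q P := by
  obtain ⟨f, h1, h2, h3, h4, h5⟩ := h
  refine ⟨f.symm, fun x y => ?_, fun x y => ?_, fun x => ?_, fun x => ?_, fun x => ?_⟩
  · rw [h1 (f.symm x) (f.symm y), f.apply_symm_apply, f.apply_symm_apply]
  · rw [h2 (f.symm x) (f.symm y), f.apply_symm_apply, f.apply_symm_apply]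
  · rw [h3 (f.symm x), f.apply_symm_apply]
  · rw [h4 (f.symm x), f.apply_symm_apply]
  · rw [← h5 (f.symm x), f.apply_symm_apply]

theorem Iso.trans {P Q R : PreIpomset σ} (h : Iso P Q) (h' : Iso Q R) : Iso P R := by
  obtain ⟨f, h1, h2, h3, h4, h5⟩ := h
  obtain ⟨g, g1, g2, g3, g4, g5⟩ := h'
  exact ⟨f.trans g, fun x y => (h1 x y).trans (g1 _ _), fun x y => (h2 x y).trans (g2 _ _),
    fun x => (h3 x).trans (g3 _), fun x => (h4 x).trans (g4 _),
    fun x => (g5 (f x)).trans (h5 x)⟩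

/-- On a discrete ipomset, the event order is irreflexive, transitive and total. -/
theorem evord_strict_linear {P : PreIpomset σ} (hP : P.IsIpomset) (hd : P.Discrete) :
    (∀ x, ¬ P.evord x x) ∧ (∀ x y z, P.evord x y → P.evord y z → P.evord x z) ∧
    (∀ x y, x ≠ y → P.evord x y ∨ P.evord y x) := by
  have hirr : ∀ x, ¬ P.evord x x := fun x h => hP.evord_acyclic x (Relation.TransGen.single h)
  refine ⟨hirr, fun x y z hxy hyz => ?_, fun x y hxy => ?_⟩
  · rcases eq_or_ne x z with rfl | hne
    · exact absurd ((Relation.TransGen.single hxy).tail hyz) (hP.evord_acyclic x)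
    rcases hP.total x z hne with h | h | h | h
    · exact absurd h (hd x z)
    · exact absurd h (hd z x)
    · exact h
    · exact absurd (((Relation.TransGen.single hxy).tail hyz).tail h) (hP.evord_acyclic x)
  · rcases hP.total x y hxy with h | h | h | h
    · exact absurd h (hd x y)
    · exact absurd h (hd y x)
    · exact Or.inl h
    · exact Or.inr h

/-- Two relation-preserving equivalences out of a finite strict linear order agree. -/
theorem equiv_unique_of_rel {α β : Type*} [Finite α] {r : α → α → Prop} {s : β → β → Prop}
    (hirr : ∀ x, ¬ r x x) (htr : ∀ x y z, r x y → r y z → r x z)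
    (htot : ∀ x y, x ≠ y → r x y ∨ r y x)
    (e₁ e₂ : α ≃ β) (h₁ : ∀ x y, r x y ↔ s (e₁ x) (e₁ y))
    (h₂ : ∀ x y, r x y ↔ s (e₂ x) (e₂ y)) : e₁ = e₂ := by
  set φ : α ≃ α := e₁.trans e₂.symm with hφdef
  have hφ : ∀ x y, r x y ↔ r (φ x) (φ y) := by
    intro x y
    rw [h₁ x y]
    have := h₂ (e₂.symm (e₁ x)) (e₂.symm (e₁ y))
    simp only [Equiv.apply_symm_apply] at this
    rw [← this]; rfl
  have key : ∀ x, φ x = x := by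
    classical
    have hinj : ∀ x y : α, {z | r z x}.ncard = {z | r z y}.ncard → x = y := by
      intro x y hcard
      by_contra hne
      have hfin : ∀ w : α, {z | r z w}.Finite := fun w => Set.toFinite _
      have hsub : ∀ a b : α, r a b → {z | r z a}.ncard < {z | r z b}.ncard := by
        intro a b hab
        have h1 : insert a {z | r z a} ⊆ {z | r z b} := by
          rintro z (rfl | hz)
          · exact hab
          · exact htr _ _ _ hz hab
        have h2 : a ∉ {z | r z a} := hirr a
        calc {z | r z a}.ncard < (insert a {z | r z a}).ncard := by
              rw [Set.ncard_insert_of_notMem h2 (hfin a)]; omega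
          _ ≤ {z | r z b}.ncard := Set.ncard_le_ncard h1 (hfin b)
      rcases htot x y hne with h | h
      · exact absurd hcard (Nat.ne_of_lt (hsub _ _ h))
      · exact absurd hcard.symm (Nat.ne_of_lt (hsub _ _ h))
    intro x
    apply hinj
    have himg : {z | r z (φ x)} = φ '' {z | r z x} := by
      ext z
      constructor
      · intro hz
        exact ⟨φ.symm z, by rw [Set.mem_setOf_eq, hφ (φ.symm z) x]; simpa using hz,
          by simp⟩
      · rintro ⟨w, hw, rfl⟩
        exact (hφ w x).mp hw
    rw [himg, Set.ncard_image_of_injective _ φ.injective]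
  ext x
  have := key x
  simp only [hφdef, Equiv.trans_apply] at this
  exact (Equiv.symm_apply_eq e₂).mp this

end PreIpomset
namespace PreIpomset
variable {σ : Type}

theorem gluePOf_eq_some {P Q : PreIpomset σ} {u} {x : P.carrier} :
    gluePOf P Q u = some x ↔ u = Sum.inl x := by
  cases u <;> simp [gluePOf]

theorem glueQOf_inr {P Q : PreIpomset σ} (m : Matching P Q) (y : {y : Q.carrier // y ∉ Q.S}) :
    glueQOf P Q m (Sum.inr y) = some y.val := rfl

theorem glueQOf_inl_mem {P Q : PreIpomset σ} (m : Matching P Q) {x : P.carrier}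
    (h : x ∈ P.T) : glueQOf P Q m (Sum.inl x) = some (m.g ⟨x, h⟩).val := by
  simp [glueQOf, dif_pos h]

/-- Event order between two left points of a gluing is the event order of `P`. -/
theorem glue_evord_inl_inl {P Q : PreIpomset σ} (m : Matching P Q) (a b : P.carrier) :
    (glue P Q m).evord (Sum.inl a) (Sum.inl b) ↔ P.evord a b := by
  constructor
  · rintro (⟨x, x', hx, hx', hxx⟩ | ⟨y, y', hy, hy', hyy⟩)
    · rw [gluePOf_eq_some] at hx hx'
      obtain rfl : a = x := by injection hx
      obtain rfl : b = x' := by injection hx'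
      exact hxx
    · by_cases ha : a ∈ P.T
      · by_cases hb : b ∈ P.T
        · rw [glueQOf_inl_mem m ha] at hy; rw [glueQOf_inl_mem m hb] at hy'
          obtain rfl : (m.g ⟨a, ha⟩).val = y := by injection hy
          obtain rfl : (m.g ⟨b, hb⟩).val = y' := by injection hy'
          exact (m.evord_iff ⟨a, ha⟩ ⟨b, hb⟩).mpr hyy
        · simp [glueQOf, dif_neg hb] at hy'
      · simp [glueQOf, dif_neg ha] at hy
  · intro h
    exact Or.inl ⟨a, b, rfl, rfl, h⟩

/-- The set of points of `Q` matched to interface sources of `P`. -/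
def SSet (P Q : PreIpomset σ) (m : Matching P Q) : Set Q.carrier :=
  {y | ∃ x, ∃ h : x ∈ P.T, x ∈ P.S ∧ (m.g ⟨x, h⟩).val = y}

/-- Gluing a discrete ipomset with full target interface onto `Q` yields `Q` with a
shrunk source interface. -/
theorem starter_glue_iso {P Q : PreIpomset σ} (hPd : P.Discrete) (hPT : P.T = Set.univ)
    (m : Matching P Q) : Iso (glue P Q m) (Q.withIfaces (SSet P Q m) Q.T) := by
  classical
  have hT : ∀ x : P.carrier, x ∈ P.T := by rw [hPT]; exact fun _ => trivial
  set toFun : P.carrier ⊕ {y : Q.carrier // y ∉ Q.S} → Q.carrier :=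
    Sum.elim (fun x => (m.g ⟨x, hT x⟩).val) Subtype.val with htoFun
  have hq : ∀ u, glueQOf P Q m u = some (toFun u) := by
    rintro (x | y)
    · rw [glueQOf_inl_mem m (hT x)]; rfl
    · rfl
  have hbij : Function.Bijective toFun := by
    constructor
    · rintro (x | y) (x' | y') h
      · simp only [toFun, Sum.elim_inl] at h
        have := m.g.injective (Subtype.ext h)
        obtain rfl : x = x' := by injection this
        rfl
      · have := (m.g ⟨x, hT x⟩).2
        rw [show ((m.g ⟨x, hT x⟩ : {y // y ∈ Q.S}) : Q.carrier) = y'.val from h] at this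
        exact absurd this y'.2
      · have := (m.g ⟨x', hT x'⟩).2
        rw [show ((m.g ⟨x', hT x'⟩ : {y // y ∈ Q.S}) : Q.carrier) = y.val from h.symm] at this
        exact absurd this y.2
      · exact congrArg Sum.inr (Subtype.ext h)
    · intro y
      by_cases h : y ∈ Q.S
      · refine ⟨Sum.inl (m.g.symm ⟨y, h⟩).val, ?_⟩
        show (m.g ⟨(m.g.symm ⟨y, h⟩).val, _⟩).val = y
        rw [Subtype.coe_eta, Equiv.apply_symm_apply]
      · exact ⟨Sum.inr ⟨y, h⟩, rfl⟩
  refine ⟨Equiv.ofBijective toFun hbij, fun u v => ?_, fun u v => ?_, fun u => ?_,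
    fun u => ?_, fun u => ?_⟩
  · -- lt
    show _ ↔ Q.lt (toFun u) (toFun v)
    constructor
    · rintro (⟨x, x', hx, hx', hxx⟩ | ⟨y, y', hy, hy', hyy⟩ | ⟨⟨x, hx, hxT⟩, _⟩)
      · exact absurd hxx (hPd x x')
      · rw [hq u] at hy; rw [hq v] at hy'
        obtain rfl : toFun u = y := by injection hy
        obtain rfl : toFun v = y' := by injection hy'
        exact hyy
      · exact absurd (hT x) hxT
    · intro h
      exact Or.inr (Or.inl ⟨toFun u, toFun v, hq u, hq v, h⟩)
  · -- evord
    show _ ↔ Q.evord (toFun u) (toFun v)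
    constructor
    · rintro (⟨x, x', hx, hx', hxx⟩ | ⟨y, y', hy, hy', hyy⟩)
      · replace hx := gluePOf_eq_some.mp hx; replace hx' := gluePOf_eq_some.mp hx'
        subst hx; subst hx'
        exact (m.evord_iff ⟨x, hT x⟩ ⟨x', hT x'⟩).mp hxx
      · rw [hq u] at hy; rw [hq v] at hy'
        obtain rfl : toFun u = y := by injection hy
        obtain rfl : toFun v = y' := by injection hy'
        exact hyy
    · intro h
      exact Or.inr ⟨toFun u, toFun v, hq u, hq v, h⟩
  · -- S
    show (∃ x, gluePOf P Q u = some x ∧ x ∈ P.S) ↔ toFun u ∈ SSet P Q m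
    constructor
    · rintro ⟨x, hx, hxS⟩
      replace hx := gluePOf_eq_some.mp hx; subst hx
      exact ⟨x, hT x, hxS, rfl⟩
    · rintro ⟨x, h, hxS, hval⟩
      cases u with
      | inl a =>
        refine ⟨a, rfl, ?_⟩
        have : m.g ⟨x, h⟩ = m.g ⟨a, hT a⟩ := Subtype.ext hval
        have : (⟨x, h⟩ : {x // x ∈ P.T}) = ⟨a, hT a⟩ := m.g.injective this
        obtain rfl : x = a := by injection this
        exact hxS
      | inr y =>
        have hy : (y : Q.carrier) ∈ Q.S := by
          have := (m.g ⟨x, h⟩).2; rwa [hval] at this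
        exact absurd hy y.2
  · -- T
    show (∃ y, glueQOf P Q m u = some y ∧ y ∈ Q.T) ↔ toFun u ∈ Q.T
    constructor
    · rintro ⟨y, hy, hyT⟩
      rw [hq u] at hy
      obtain rfl : toFun u = y := by injection hy
      exact hyT
    · intro h; exact ⟨toFun u, hq u, h⟩
  · -- lab
    show Q.lab (toFun u) = _
    cases u with
    | inl x => exact m.lab_eq ⟨x, hT x⟩
    | inr y => rfl

end PreIpomset
namespace PreIpomset
variable {σ : Type}

/-- Transport a matching along an isomorphism in the first slot, and the induced
isomorphism of gluings. -/
theorem glue_congr_left {P P' Q : PreIpomset σ} (hiso : Iso P P') (m : Matching P Q) :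
    ∃ m' : Matching P' Q, Iso (glue P Q m) (glue P' Q m') := by
  classical
  obtain ⟨f, hlt, hev, hS, hT, hlab⟩ := hiso
  refine ⟨⟨(f.subtypeEquiv hT).symm.trans m.g, fun x y => ?_, fun x => ?_⟩, ?_⟩
  · show P'.evord x.val y.val ↔ Q.evord (m.g ⟨f.symm x.val, _⟩).val (m.g ⟨f.symm y.val, _⟩).val
    rw [← m.evord_iff]
    show P'.evord x.val y.val ↔ P.evord (f.symm x.val) (f.symm y.val)
    rw [hev (f.symm x.val) (f.symm y.val), f.apply_symm_apply, f.apply_symm_apply]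
  · show Q.lab (m.g ⟨f.symm x.val, _⟩).val = P'.lab x.val
    rw [m.lab_eq]
    have := hlab (f.symm x.val)
    rw [f.apply_symm_apply] at this
    exact this.symm
  set m' : Matching P' Q := ⟨(f.subtypeEquiv hT).symm.trans m.g, _, _⟩
  set F : P.carrier ⊕ {y : Q.carrier // y ∉ Q.S} → P'.carrier ⊕ {y : Q.carrier // y ∉ Q.S} :=
    Sum.map f id with hF
  have hFeq : Function.Bijective F := (Equiv.sumCongr f (Equiv.refl _)).bijective
  have hPiff : ∀ u (x' : P'.carrier),
      gluePOf P' Q (F u) = some x' ↔ ∃ x, gluePOf P Q u = some x ∧ f x = x' := by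
    rintro (a | y) x'
    · show some (f a) = some x' ↔ _
      constructor
      · intro h; exact ⟨a, rfl, by injection h⟩
      · rintro ⟨x, hx, rfl⟩
        obtain rfl : a = x := by injection hx
        rfl
    · constructor
      · intro h; exact absurd h (by simp [gluePOf, F])
      · rintro ⟨x, hx, _⟩; exact absurd hx (by simp [gluePOf])
  have hQ : ∀ u, glueQOf P' Q m' (F u) = glueQOf P Q m u := by
    rintro (a | y)
    · show (if h : f a ∈ P'.T then _ else _) = (if h : a ∈ P.T then _ else _)
      by_cases h : a ∈ P.T
      · rw [dif_pos ((hT a).mp h), dif_pos h]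
        show some (m.g ⟨f.symm (f a), _⟩).val = some (m.g ⟨a, h⟩).val
        exact congrArg (fun z => some (m.g z).val) (Subtype.ext (f.symm_apply_apply a))
      · rw [dif_neg (fun hc => h ((hT a).mpr hc)), dif_neg h]
    · rfl
  refine ⟨Equiv.sumCongr f (Equiv.refl _), fun u v => ?_, fun u v => ?_, fun u => ?_,
    fun u => ?_, fun u => ?_⟩
  · constructor
    · rintro (⟨x, x', hx, hx', h⟩ | ⟨y, y', hy, hy', h⟩ | ⟨⟨x, hx, hxT⟩, ⟨y, hy, hyS⟩⟩)
      · exact Or.inl ⟨f x, f x', (hPiff u _).mpr ⟨x, hx, rfl⟩, (hPiff v _).mpr ⟨x', hx', rfl⟩,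
          (hlt x x').mp h⟩
      · exact Or.inr (Or.inl ⟨y, y', (hQ u).symm ▸ hy, (hQ v).symm ▸ hy', h⟩)
      · exact Or.inr (Or.inr ⟨⟨f x, (hPiff u _).mpr ⟨x, hx, rfl⟩,
          fun hc => hxT ((hT x).mpr hc)⟩, ⟨y, (hQ v).symm ▸ hy, hyS⟩⟩)
    · rintro (⟨x', x'', hx, hx', h⟩ | ⟨y, y', hy, hy', h⟩ | ⟨⟨x', hx, hxT⟩, ⟨y, hy, hyS⟩⟩)
      · obtain ⟨x, hxu, rfl⟩ := (hPiff u _).mp hx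
        obtain ⟨z, hzv, rfl⟩ := (hPiff v _).mp hx'
        exact Or.inl ⟨x, z, hxu, hzv, (hlt x z).mpr h⟩
      · exact Or.inr (Or.inl ⟨y, y', (hQ u) ▸ hy, (hQ v) ▸ hy', h⟩)
      · obtain ⟨x, hxu, rfl⟩ := (hPiff u _).mp hx
        exact Or.inr (Or.inr ⟨⟨x, hxu, fun hc => hxT ((hT x).mp hc)⟩,
          ⟨y, (hQ v) ▸ hy, hyS⟩⟩)
  · constructor
    · rintro (⟨x, x', hx, hx', h⟩ | ⟨y, y', hy, hy', h⟩)
      · exact Or.inl ⟨f x, f x', (hPiff u _).mpr ⟨x, hx, rfl⟩, (hPiff v _).mpr ⟨x', hx', rfl⟩,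
          (hev x x').mp h⟩
      · exact Or.inr ⟨y, y', (hQ u).symm ▸ hy, (hQ v).symm ▸ hy', h⟩
    · rintro (⟨x', x'', hx, hx', h⟩ | ⟨y, y', hy, hy', h⟩)
      · obtain ⟨x, hxu, rfl⟩ := (hPiff u _).mp hx
        obtain ⟨z, hzv, rfl⟩ := (hPiff v _).mp hx'
        exact Or.inl ⟨x, z, hxu, hzv, (hev x z).mpr h⟩
      · exact Or.inr ⟨y, y', (hQ u) ▸ hy, (hQ v) ▸ hy', h⟩
  · constructor
    · rintro ⟨x, hx, hxS⟩
      exact ⟨f x, (hPiff u _).mpr ⟨x, hx, rfl⟩, (hS x).mp hxS⟩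
    · rintro ⟨x', hx, hxS⟩
      obtain ⟨x, hxu, rfl⟩ := (hPiff u _).mp hx
      exact ⟨x, hxu, (hS x).mpr hxS⟩
  · constructor
    · rintro ⟨y, hy, hyT⟩
      exact ⟨y, (hQ u).symm ▸ hy, hyT⟩
    · rintro ⟨y, hy, hyT⟩
      exact ⟨y, (hQ u) ▸ hy, hyT⟩
  · cases u with
    | inl x => exact hlab x
    | inr y => rfl

theorem GlueRel.congr_left {P P' Q R : PreIpomset σ} (hiso : Iso P P') :
    GlueRel P Q R → GlueRel P' Q R := by
  rintro ⟨m, hm⟩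
  obtain ⟨m', hm'⟩ := glue_congr_left hiso m
  exact ⟨m', hm'.symm.trans hm⟩

end PreIpomset
namespace PreIpomset
variable {σ : Type}

theorem glueChoice_eq {P Q : PreIpomset σ} (hm : Nonempty (Matching P Q)) :
    glueChoice P Q = glue P Q hm.some := dif_pos hm

/-- The source interface of a gluing is the source interface of the left factor. -/
noncomputable def glueSEquiv (P Q : PreIpomset σ) (m : Matching P Q) :
    {x : P.carrier // x ∈ P.S} ≃ {u : (glue P Q m).carrier // u ∈ (glue P Q m).S} := by
  refine Equiv.ofBijective (fun x => ⟨Sum.inl x.val, ⟨x.val, rfl, x.2⟩⟩) ⟨?_, ?_⟩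
  · intro x y h
    have := congrArg Subtype.val h
    exact Subtype.ext (by injection this)
  · rintro ⟨u, a, hu, haS⟩
    replace hu := gluePOf_eq_some.mp hu
    exact ⟨⟨a, haS⟩, Subtype.ext hu.symm⟩

/-- Changing the source interface of the left factor of a gluing only changes the
source interface of the gluing. -/
theorem glue_SChange (Q B : PreIpomset σ) (S₀ : Set Q.carrier) (m : Matching Q B)
    (M : Matching (Q.withIfaces S₀ Q.T) B) (hgg : M.g = m.g) :
    Iso ((Q.withIfaces S₀ Q.T).glue B M)
      ((Q.glue B m).withIfaces
        (setOf fun u => ∃ a, gluePOf Q B u = some a ∧ a ∈ S₀) (Q.glue B m).T) := by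
  have hPw : ∀ u, gluePOf (Q.withIfaces S₀ Q.T) B u = gluePOf Q B u := by
    rintro (a | y) <;> rfl
  have hQw : ∀ u, glueQOf (Q.withIfaces S₀ Q.T) B M u = glueQOf Q B m u := by
    rintro (a | y)
    · show (if h : a ∈ Q.T then some (M.g ⟨a, h⟩).val else none) =
        (if h : a ∈ Q.T then some (m.g ⟨a, h⟩).val else none)
      rw [hgg]
      rfl
    · rfl
  refine ⟨Equiv.refl _, fun u v => ?_, fun u v => ?_, fun u => ?_, fun u => ?_, fun u => ?_⟩
  · constructor
    · rintro (⟨x, x', hx, hx', h⟩ | ⟨y, y', hy, hy', h⟩ | ⟨⟨x, hx, hxT⟩, ⟨y, hy, hyS⟩⟩)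
      · exact Or.inl ⟨x, x', (hPw u) ▸ hx, (hPw v) ▸ hx', h⟩
      · exact Or.inr (Or.inl ⟨y, y', (hQw u) ▸ hy, (hQw v) ▸ hy', h⟩)
      · exact Or.inr (Or.inr ⟨⟨x, (hPw u) ▸ hx, hxT⟩, ⟨y, (hQw v) ▸ hy, hyS⟩⟩)
    · rintro (⟨x, x', hx, hx', h⟩ | ⟨y, y', hy, hy', h⟩ | ⟨⟨x, hx, hxT⟩, ⟨y, hy, hyS⟩⟩)
      · exact Or.inl ⟨x, x', (hPw u).symm ▸ hx, (hPw v).symm ▸ hx', h⟩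
      · exact Or.inr (Or.inl ⟨y, y', (hQw u).symm ▸ hy, (hQw v).symm ▸ hy', h⟩)
      · exact Or.inr (Or.inr ⟨⟨x, (hPw u).symm ▸ hx, hxT⟩, ⟨y, (hQw v).symm ▸ hy, hyS⟩⟩)
  · constructor
    · rintro (⟨x, x', hx, hx', h⟩ | ⟨y, y', hy, hy', h⟩)
      · exact Or.inl ⟨x, x', (hPw u) ▸ hx, (hPw v) ▸ hx', h⟩
      · exact Or.inr ⟨y, y', (hQw u) ▸ hy, (hQw v) ▸ hy', h⟩
    · rintro (⟨x, x', hx, hx', h⟩ | ⟨y, y', hy, hy', h⟩)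
      · exact Or.inl ⟨x, x', (hPw u).symm ▸ hx, (hPw v).symm ▸ hx', h⟩
      · exact Or.inr ⟨y, y', (hQw u).symm ▸ hy, (hQw v).symm ▸ hy', h⟩
  · constructor
    · rintro ⟨a, hu, ha⟩
      exact ⟨a, (hPw u) ▸ hu, ha⟩
    · rintro ⟨a, hu, ha⟩
      exact ⟨a, (hPw u).symm ▸ hu, ha⟩
  · constructor
    · rintro ⟨y, hy, hyT⟩
      exact ⟨y, (hQw u) ▸ hy, hyT⟩
    · rintro ⟨y, hy, hyT⟩
      exact ⟨y, (hQw u).symm ▸ hy, hyT⟩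
  · cases u <;> rfl

/-- Decomposing a gluing whose left factor is a starter. -/
theorem glueChoice_glueRel_elim {P Q : PreIpomset σ} (hPd : P.Discrete)
    (hPT : P.T = Set.univ) (hm : Nonempty (Matching P Q)) {B R : PreIpomset σ}
    (h : GlueRel (glueChoice P Q) B R) : ∃ R', GlueRel Q B R' ∧ GlueRel P R' R := by
  rw [glueChoice_eq hm] at h
  set m₀ := hm.some with hm₀
  have L1 := starter_glue_iso hPd hPT m₀
  obtain ⟨M, hM⟩ := GlueRel.congr_left L1 h
  set m2 : Matching Q B := ⟨M.g, M.evord_iff, M.lab_eq⟩ with hm2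
  set G := glue Q B m2 with hG
  refine ⟨G, ⟨m2, Iso.refl _⟩, ?_⟩
  have hgev : ∀ x y : {x : P.carrier // x ∈ P.T},
      P.evord x.val y.val ↔ G.evord (Sum.inl (m₀.g x).val) (Sum.inl (m₀.g y).val) := by
    intro x y
    rw [glue_evord_inl_inl m2]
    exact m₀.evord_iff x y
  set m3 : Matching P G :=
    ⟨m₀.g.trans (glueSEquiv Q B m2), fun x y => hgev x y, fun x => m₀.lab_eq x⟩ with hm3
  refine ⟨m3, ?_⟩
  have L1' := starter_glue_iso hPd hPT m3
  refine L1'.trans ?_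
  have hSC := glue_SChange Q B (SSet P Q m₀) m2 M rfl
  have hM2 : Iso (G.withIfaces
      (setOf fun u => ∃ a, gluePOf Q B u = some a ∧ a ∈ SSet P Q m₀) G.T) R :=
    hSC.symm.trans hM
  have hss : SSet P G m3 =
      setOf (fun u => ∃ a, gluePOf Q B u = some a ∧ a ∈ SSet P Q m₀) := by
    ext u
    constructor
    · rintro ⟨x, h, hxS, hval⟩
      exact ⟨(m₀.g ⟨x, h⟩).val, by rw [← hval]; rfl, ⟨x, h, hxS, rfl⟩⟩
    · rintro ⟨a, hu, x, h, hxS, hval⟩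
      replace hu := gluePOf_eq_some.mp hu
      exact ⟨x, h, hxS, by rw [hu, ← hval]; rfl⟩
  rw [hss]
  exact hM2

/-- Composing a gluing whose left factor is a starter. -/
theorem glueChoice_glueRel_intro {P Q : PreIpomset σ} (hPi : P.IsIpomset)
    (hPd : P.Discrete) (hPT : P.T = Set.univ) (hm : Nonempty (Matching P Q))
    {B R R' : PreIpomset σ}
    (h1 : GlueRel Q B R') (h2 : GlueRel P R' R) : GlueRel (glueChoice P Q) B R := by
  classical
  rw [glueChoice_eq hm]
  set m₀ := hm.some with hm₀
  obtain ⟨m2, f'⟩ := h1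
  obtain ⟨m3, f⟩ := h2
  have L1 := starter_glue_iso hPd hPT m₀
  apply GlueRel.congr_left L1.symm
  refine ⟨⟨m2.g, m2.evord_iff, m2.lab_eq⟩, ?_⟩
  set G := glue Q B m2 with hG
  have hSC := glue_SChange Q B (SSet P Q m₀) m2 ⟨m2.g, m2.evord_iff, m2.lab_eq⟩ rfl
  refine hSC.trans ?_
  have step2 : Iso (R'.withIfaces (SSet P R' m3) R'.T) R :=
    (starter_glue_iso hPd hPT m3).symm.trans f
  refine Iso.trans ?_ step2
  obtain ⟨f'e, g1, g2, g3, g4, g5⟩ := f'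
  have hgev : ∀ x y : {x : P.carrier // x ∈ P.T},
      P.evord x.val y.val ↔ G.evord (Sum.inl (m₀.g x).val) (Sum.inl (m₀.g y).val) := by
    intro x y
    rw [glue_evord_inl_inl m2]
    exact m₀.evord_iff x y
  set e₁ : {x : P.carrier // x ∈ P.T} ≃ {u : G.carrier // u ∈ G.S} :=
    m₀.g.trans (glueSEquiv Q B m2) with he₁
  set e₂ : {x : P.carrier // x ∈ P.T} ≃ {u : G.carrier // u ∈ G.S} :=
    m3.g.trans (Equiv.subtypeEquiv f'e g3).symm with he₂
  have he₂val : ∀ x, (e₂ x).val = f'e.symm (m3.g x).val := fun _ => rfl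
  have hlin := evord_strict_linear hPi hPd
  haveI := P.fin
  have hue : e₁ = e₂ := by
    refine equiv_unique_of_rel (r := fun a b : {x : P.carrier // x ∈ P.T} =>
        P.evord a.val b.val)
      (s := fun u v : {u : G.carrier // u ∈ G.S} => G.evord u.val v.val)
      (fun x => hlin.1 x.val) (fun x y z => hlin.2.1 x.val y.val z.val)
      (fun x y hxy => hlin.2.2 x.val y.val (fun hv => hxy (Subtype.ext hv)))
      e₁ e₂ (fun x y => hgev x y) (fun x y => ?_)
    show P.evord x.val y.val ↔ G.evord (e₂ x).val (e₂ y).val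
    rw [m3.evord_iff x y, he₂val, he₂val]
    have := g2 (f'e.symm (m3.g x).val) (f'e.symm (m3.g y).val)
    rw [f'e.apply_symm_apply, f'e.apply_symm_apply] at this
    exact this.symm
  refine ⟨f'e, g1, g2, fun u => ?_, g4, g5⟩
  show (∃ a, gluePOf Q B u = some a ∧ a ∈ SSet P Q m₀) ↔ f'e u ∈ SSet P R' m3
  constructor
  · rintro ⟨a, hu, x, h, hxS, hval⟩
    replace hu := gluePOf_eq_some.mp hu
    have hu1 : u = (e₁ ⟨x, h⟩).val := by rw [hu, ← hval]; rfl
    rw [hue, he₂val] at hu1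
    refine ⟨x, h, hxS, ?_⟩
    rw [hu1, f'e.apply_symm_apply]
  · rintro ⟨x, h, hxS, hval⟩
    have hu1 : u = (e₂ ⟨x, h⟩).val := by
      rw [he₂val, hval]; exact (f'e.symm_apply_apply u).symm
    rw [← hue] at hu1
    exact ⟨(m₀.g ⟨x, h⟩).val, by rw [hu1]; rfl, ⟨x, h, hxS, rfl⟩⟩

end PreIpomset
namespace PreIpomset
variable {σ : Type}

theorem matching_nonempty {P Q U : PreIpomset σ} (h1 : Iso P.tgtIface U)
    (h2 : Iso Q.srcIface U) : Nonempty (Matching P Q) := by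
  obtain ⟨f1, _, e1, _, _, l1⟩ := h1
  obtain ⟨f2, _, e2, _, _, l2⟩ := h2
  refine ⟨⟨f1.trans f2.symm, fun x y => ?_, fun x => ?_⟩⟩
  · have h := e2 (f2.symm (f1 x)) (f2.symm (f1 y))
    rw [f2.apply_symm_apply, f2.apply_symm_apply] at h
    exact (e1 x y).trans h.symm
  · have h := l2 (f2.symm (f1 x))
    rw [f2.apply_symm_apply] at h
    exact h.symm.trans (l1 x)

end PreIpomset

namespace PAutomaton
open PreIpomset
variable {σ : Type}

theorem src_ne_tgt {A : PAutomaton σ} (hA : A.IsPA) {c : A.E}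
    (hc : IsProperStarter (A.lab c)) : A.src c ≠ A.tgt c := by
  intro hEq
  have h1 : Iso (A.lab c).srcIface (A.mu (A.src c)) := hA.2.2.2.2.1 c
  have h2 : Iso (A.lab c).tgtIface (A.mu (A.tgt c)) := hA.2.2.2.2.2 c
  rw [hEq] at h1
  obtain ⟨f, -, -, -, -, -⟩ := h1.trans h2.symm
  haveI := (A.lab c).fin
  have hcard : Nat.card {x : (A.lab c).carrier // x ∈ (A.lab c).S} =
      Nat.card {x : (A.lab c).carrier // x ∈ (A.lab c).T} := Nat.card_congr f
  have hT' : Nat.card {x : (A.lab c).carrier // x ∈ (A.lab c).T} =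
      Nat.card (A.lab c).carrier := by
    rw [hc.1.2.2]; exact Nat.card_congr (Equiv.Set.univ _)
  have hS' : ((A.lab c).S).ncard < (Set.univ : Set (A.lab c).carrier).ncard :=
    Set.ncard_lt_ncard ((Set.ssubset_univ_iff).mpr hc.2) Set.finite_univ
  rw [Set.ncard_univ] at hS'
  have hSS : Nat.card {x : (A.lab c).carrier // x ∈ (A.lab c).S} = ((A.lab c).S).ncard :=
    Nat.card_coe_set_eq _
  omega

theorem matching_edge {A : PAutomaton σ} (hA : A.IsPA) {c e : A.E}
    (he : A.src e = A.tgt c) : Nonempty (Matching (A.lab c) (A.lab e)) := by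
  have h2 : Iso (A.lab e).srcIface (A.mu (A.src e)) := hA.2.2.2.2.1 e
  rw [he] at h2
  exact matching_nonempty (hA.2.2.2.2.2 c) h2

/-- Translate paths of `𝒜_c` back to paths of `𝒜`. -/
theorem path_back {A : PAutomaton σ} (hA : A.IsPA) {c : A.E}
    (hc : IsProperStarter (A.lab c)) {p r : (A.Ac c).Q} (α : Path (A.Ac c) p r)
    (R : PreIpomset σ) (hR : Rec (A := A.Ac c) α R) :
    ∃ β : Path A p r, Rec (A := A) β R := by
  induction hR with
  | nil q R h => exact ⟨Path.nil (A := A) q, Rec.nil (A := A) q R h⟩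
  | cons E rest hrec hglue ih =>
    obtain ⟨β, hβ⟩ := ih
    cases E with
    | inl e => exact ⟨Path.cons (A := A) e.val β, Rec.cons (A := A) e.val β hβ hglue⟩
    | inr e =>
      obtain ⟨Rm, h1, h2⟩ := glueChoice_glueRel_elim hc.1.2.1 hc.1.2.2
        (matching_edge hA e.2) hglue
      have hcast : ∀ {p₁ p₂ rr : A.Q} (_ : p₁ = p₂) (γ : Path A p₁ rr)
          (_ : Rec (A := A) γ Rm), ∃ γ' : Path A p₂ rr, Rec (A := A) γ' Rm := by
        intro p₁ p₂ rr h γ hγ; subst h; exact ⟨γ, hγ⟩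
      obtain ⟨γ', hγ'⟩ := hcast e.2 (Path.cons (A := A) e.val β)
        (Rec.cons (A := A) e.val β hβ h1)
      exact ⟨Path.cons (A := A) c γ', Rec.cons (A := A) c γ' hγ' h2⟩

end PAutomaton
namespace PAutomaton
open PreIpomset
variable {σ : Type}

/-- Absorb the bad starter `c` into the following transition. -/
theorem absorb {A : PAutomaton σ} (hA : A.IsPA) {c : A.E}
    (hc : IsProperStarter (A.lab c)) (hst : A.src c ≠ A.tgt c)
    {q r : (A.Ac c).Q} (hq : q = A.tgt c) (hr : r ≠ A.tgt c)
    (β : Path (A.Ac c) q r) {R' R : PreIpomset σ} (hβ : Rec (A := A.Ac c) β R')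
    (hglue : GlueRel (A.lab c) R' R) :
    ∃ γ : Path (A.Ac c) (A.src c) r, Rec (A := A.Ac c) γ R := by
  cases hβ with
  | nil q' _ h => exact absurd hq hr
  | cons E β' hrec' hglue' =>
    cases E with
    | inl e' =>
      have hGC : GlueRel (glueChoice (A.lab c) (A.lab e'.val)) _ R :=
        glueChoice_glueRel_intro hc.1.1 hc.1.2.1 hc.1.2.2 (matching_edge hA hq)
          hglue' hglue
      exact ⟨Path.cons (A := A.Ac c) (Sum.inr ⟨e'.val, hq⟩) β',
        Rec.cons (A := A.Ac c) (Sum.inr ⟨e'.val, hq⟩) β' hrec' hGC⟩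
    | inr e' => exact absurd hq hst

/-- Translate accepting paths of `𝒜` to paths of `𝒜_c`. -/
theorem path_fwd {A : PAutomaton σ} (hA : A.IsPA) {c : A.E}
    (hc : IsProperStarter (A.lab c)) {p r : A.Q} (α : Path A p r)
    (R : PreIpomset σ) (hR : Rec (A := A) α R) (hr : r ≠ A.tgt c) :
    ∃ β : Path (A.Ac c) p r, Rec (A := A.Ac c) β R := by
  revert hr
  induction hR with
  | nil q R h =>
    intro hr
    exact ⟨Path.nil (A := A.Ac c) q, Rec.nil (A := A.Ac c) q R h⟩
  | cons e rest hrec hglue ih =>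
    intro hr
    obtain ⟨β, hβ⟩ := ih hr
    by_cases hec : e = c
    · subst hec
      exact absorb hA hc (src_ne_tgt hA hc) rfl hr β hβ hglue
    · exact ⟨Path.cons (A := A.Ac c) (Sum.inl ⟨e, hec⟩) β,
        Rec.cons (A := A.Ac c) (Sum.inl ⟨e, hec⟩) β hβ hglue⟩

/-- Removing a bad starter transition preserves the language. -/
theorem Ac_lang_eq {A : PAutomaton σ} (hA : A.IsPA) {c : A.E}
    (hc : IsProperStarter (A.lab c)) (hbad : A.tgt c ∉ A.accept) :
    (A.Ac c).lang = A.lang := by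
  ext R
  constructor
  · rintro ⟨p, r, α, hp, hr, hR⟩
    obtain ⟨β, hβ⟩ := path_back hA hc α R hR
    exact ⟨p, r, β, hp, hr, hβ⟩
  · rintro ⟨p, r, α, hp, hr, hR⟩
    obtain ⟨β, hβ⟩ := path_fwd hA hc α R hR (fun h => hbad (h ▸ hr))
    exact ⟨p, r, β, hp, hr, hβ⟩

end PAutomaton
namespace PreIpomset
variable {σ : Type}

theorem glue_card {P Q : PreIpomset σ} (m : Matching P Q) (hPT : P.T = Set.univ) :
    Nat.card (glue P Q m).carrier = Nat.card Q.carrier := by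
  classical
  exact Nat.card_congr ((Equiv.sumCongr
    ((Equiv.subtypeUnivEquiv (fun x => by rw [hPT]; trivial)).symm.trans m.g)
    (Equiv.refl _)).trans (Equiv.sumCompl (· ∈ Q.S)))

theorem card_le_of_matching {P Q : PreIpomset σ} (m : Matching P Q)
    (hPT : P.T = Set.univ) : Nat.card P.carrier ≤ Nat.card Q.carrier := by
  haveI := Q.fin
  calc Nat.card P.carrier = Nat.card {y : Q.carrier // y ∈ Q.S} :=
        Nat.card_congr ((Equiv.subtypeUnivEquiv
          (fun x => by rw [hPT]; trivial)).symm.trans m.g)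
    _ ≤ Nat.card Q.carrier := Nat.card_le_card_of_injective _ Subtype.val_injective

/-- The gluing of a proper starter with anything is not a proper terminator. -/
theorem glue_not_properTerminator {P Q : PreIpomset σ} (hPS : P.S ≠ Set.univ)
    (m : Matching P Q) : ¬ IsProperTerminator (glue P Q m) := by
  rintro ⟨⟨-, -, hSuniv⟩, -⟩
  apply hPS
  rw [Set.eq_univ_iff_forall]
  intro x
  have hx : Sum.inl x ∈ (glue P Q m).S := hSuniv ▸ Set.mem_univ _
  obtain ⟨a, ha, haS⟩ := hx
  obtain rfl : x = a := by injection ha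
  exact haS

/-- If the gluing of a starter of full dimension is again a starter, the right factor
has full interfaces. -/
theorem glue_starter_full {P Q : PreIpomset σ} (m : Matching P Q) (hPT : P.T = Set.univ)
    (hTuniv : (glue P Q m).T = Set.univ)
    (hcard : Nat.card Q.carrier = Nat.card P.carrier) :
    Q.S = Set.univ ∧ Q.T = Set.univ := by
  haveI := P.fin
  haveI := Q.fin
  have hcS : Nat.card {y : Q.carrier // y ∈ Q.S} = Nat.card P.carrier :=
    Nat.card_congr (m.g.symm.trans (Equiv.subtypeUnivEquiv (fun x => by rw [hPT]; trivial)))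
  have hSuniv : Q.S = Set.univ := by
    refine Set.eq_of_subset_of_ncard_le (Set.subset_univ _) ?_ Set.finite_univ
    rw [Set.ncard_univ]
    have hb : Nat.card {y : Q.carrier // y ∈ Q.S} = Q.S.ncard := Nat.card_coe_set_eq _
    omega
  refine ⟨hSuniv, ?_⟩
  rw [Set.eq_univ_iff_forall]
  intro y
  have hyS : y ∈ Q.S := hSuniv ▸ Set.mem_univ _
  set x := m.g.symm ⟨y, hyS⟩ with hx
  have hmem : Sum.inl x.val ∈ (glue P Q m).T := hTuniv ▸ Set.mem_univ _
  obtain ⟨y', hy', hyT⟩ := hmem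
  rw [glueQOf_inl_mem m x.2] at hy'
  have : (m.g ⟨x.val, x.2⟩).val = y' := by injection hy'
  rw [Subtype.coe_eta, hx, Equiv.apply_symm_apply] at this
  rw [← this] at hyT
  exact hyT

end PreIpomset
namespace PAutomaton
open PreIpomset
variable {σ : Type}

theorem card_subtype_and_ne {α : Type*} [Finite α] (P : α → Prop) (a : α) (ha : P a) :
    Nat.card {x // P x ∧ x ≠ a} = Nat.card {x // P x} - 1 := by
  classical
  have h1 : Nat.card {x // P x ∧ x ≠ a} = Nat.card ({x | P x} \ {a} : Set α) :=
    Nat.card_congr (Equiv.subtypeEquivRight fun x => by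
      simp [Set.mem_diff, Set.mem_singleton_iff, Set.mem_setOf_eq])
  have h2 : Nat.card {x // P x} = ({x | P x} : Set α).ncard := Nat.card_coe_set_eq _
  rw [h1, h2, Nat.card_coe_set_eq, Set.ncard_diff_singleton_of_mem (show a ∈ {x | P x} from ha)]

theorem card_Ac_eq {A : PAutomaton σ} [Finite A.E] {c : A.E}
    (Φ : (A.Ac c).E → Prop) (ψ : A.E → Prop)
    (hinl : ∀ a : {e : A.E // e ≠ c}, Φ (Sum.inl a) ↔ ψ a.val)
    (hinr : ∀ b : {e : A.E // A.src e = A.tgt c}, ¬ Φ (Sum.inr b)) :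
    Nat.card {E : (A.Ac c).E // Φ E} = Nat.card {e : A.E // ψ e ∧ e ≠ c} := by
  refine Nat.card_congr ⟨fun E => match E with
    | ⟨Sum.inl a, hE⟩ => ⟨a.val, (hinl a).mp hE, a.2⟩
    | ⟨Sum.inr b, hE⟩ => absurd hE (hinr b),
    fun e => ⟨Sum.inl ⟨e.val, e.2.2⟩, (hinl _).mpr e.2.1⟩, ?_, ?_⟩
  · rintro ⟨(a | b), hE⟩
    · rfl
    · exact absurd hE (hinr b)
  · rintro ⟨e, he⟩
    rfl

theorem card_Ac_of_not {A : PAutomaton σ} [Finite A.E] {c : A.E}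
    (Φ : (A.Ac c).E → Prop) (ψ : A.E → Prop)
    (hinl : ∀ a : {e : A.E // e ≠ c}, Φ (Sum.inl a) ↔ ψ a.val)
    (hinr : ∀ b : {e : A.E // A.src e = A.tgt c}, ¬ Φ (Sum.inr b))
    (hψc : ¬ ψ c) :
    Nat.card {E : (A.Ac c).E // Φ E} = Nat.card {e : A.E // ψ e} :=
  (card_Ac_eq Φ ψ hinl hinr).trans (Nat.card_congr (Equiv.subtypeEquivRight fun e =>
    ⟨fun h => h.1, fun h => ⟨h, fun hec => hψc (hec ▸ h)⟩⟩))

theorem card_Ac_of_mem {A : PAutomaton σ} [Finite A.E] {c : A.E}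
    (Φ : (A.Ac c).E → Prop) (ψ : A.E → Prop)
    (hinl : ∀ a : {e : A.E // e ≠ c}, Φ (Sum.inl a) ↔ ψ a.val)
    (hinr : ∀ b : {e : A.E // A.src e = A.tgt c}, ¬ Φ (Sum.inr b))
    (hψc : ψ c) :
    Nat.card {E : (A.Ac c).E // Φ E} = Nat.card {e : A.E // ψ e} - 1 :=
  (card_Ac_eq Φ ψ hinl hinr).trans (card_subtype_and_ne ψ c hψc)

section Counting

variable {A : PAutomaton σ} (hA : A.IsPA) (hg : A.IsGST) (hns : A.NoSilent) {c : A.E}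
  (hc : IsProperStarter (A.lab c)) (hbad : A.tgt c ∉ A.accept) {n : ℕ} (hn : A.dim c = n)

/-- Dimension of a composite transition. -/
theorem dim_inr (hA : A.IsPA) {c : A.E} (hc : IsProperStarter (A.lab c))
    (b : {e : A.E // A.src e = A.tgt c}) :
    (A.Ac c).dim (Sum.inr b) = Nat.card (A.lab b.val).carrier := by
  show Nat.card (glueChoice (A.lab c) (A.lab b.val)).carrier = _
  rw [glueChoice_eq (matching_edge hA b.2)]
  exact glue_card _ hc.1.2.2

theorem Ac_btt_eq (hA : A.IsPA) {c : A.E} (hc : IsProperStarter (A.lab c)) (k : ℕ) :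
    (A.Ac c).btt k = A.btt k := by
  haveI : Finite A.E := hA.2.1
  show Nat.card _ = Nat.card _
  refine card_Ac_of_not _
    (fun e => IsProperTerminator (A.lab e) ∧ A.src e ∉ A.start ∧ A.dim e = k)
    (fun a => Iff.rfl) (fun b => ?_) (fun h => hc.2 h.1.1.2.2)
  rintro ⟨h1, -, -⟩
  have hm := matching_edge hA b.2
  rw [show (A.Ac c).lab (Sum.inr b) = glueChoice (A.lab c) (A.lab b.val) from rfl,
    glueChoice_eq hm] at h1
  exact glue_not_properTerminator hc.2 hm.some h1

theorem Ac_bst_lt (hA : A.IsPA) {c : A.E} (hc : IsProperStarter (A.lab c)) {n : ℕ}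
    (hn : A.dim c = n) (k : ℕ) (hk : k < n) :
    (A.Ac c).bst k = A.bst k := by
  haveI : Finite A.E := hA.2.1
  show Nat.card _ = Nat.card _
  refine card_Ac_of_not _
    (fun e => IsProperStarter (A.lab e) ∧ A.tgt e ∉ A.accept ∧ A.dim e = k)
    (fun a => Iff.rfl) (fun b => ?_) (fun h => by have := h.2.2; omega)
  rintro ⟨-, -, h3⟩
  have hm := matching_edge hA b.2
  have hd := dim_inr hA hc b
  have hle : Nat.card (A.lab c).carrier ≤ Nat.card (A.lab b.val).carrier :=
    card_le_of_matching hm.some hc.1.2.2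
  have hnc : A.dim c = Nat.card (A.lab c).carrier := rfl
  omega

theorem Ac_bst_eq (hA : A.IsPA) (hg : A.IsGST) (hns : A.NoSilent) {c : A.E}
    (hc : IsProperStarter (A.lab c)) (hbad : A.tgt c ∉ A.accept) {n : ℕ}
    (hn : A.dim c = n) :
    (A.Ac c).bst n = A.bst n - 1 := by
  haveI : Finite A.E := hA.2.1
  show Nat.card _ = Nat.card _ - 1
  refine card_Ac_of_mem _
    (fun e => IsProperStarter (A.lab e) ∧ A.tgt e ∉ A.accept ∧ A.dim e = n)
    (fun a => Iff.rfl) (fun b => ?_) ⟨hc, hbad, hn⟩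
  rintro ⟨h1, -, h3⟩
  have hm := matching_edge hA b.2
  rw [show (A.Ac c).lab (Sum.inr b) = glueChoice (A.lab c) (A.lab b.val) from rfl,
    glueChoice_eq hm] at h1
  have hd := dim_inr hA hc b
  have hnc : A.dim c = Nat.card (A.lab c).carrier := rfl
  have hcard : Nat.card (A.lab b.val).carrier = Nat.card (A.lab c).carrier := by omega
  obtain ⟨hS, hT⟩ := glue_starter_full hm.some hc.1.2.2 h1.1.2.2 hcard
  exact hns b.val ⟨hA.2.2.2.1 b.val, hg b.val, hS, hT⟩

end Counting
end PAutomaton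
/-- Removing a bad starter transition `c` of dimension `n` from a
gST-automaton satisfying (a) and (b) preserves the language, decreases the number of
bad starter transitions of dimension `n` by one, and does not change the numbers of
bad starter transitions of smaller dimension nor of bad terminator transitions. -/
theorem remove_bad_starter {σ : Type} [Finite σ] (A : PAutomaton σ)
    (hA : A.IsPA) (hg : A.IsGST) (hns : A.NoSilent)
    (ha : ∀ e, A.tgt e ∉ A.start) (hb : ∀ e, A.src e ∉ A.accept)
    (c : A.E) (hc : IsProperStarter (A.lab c)) (hbad : A.tgt c ∉ A.accept)
    (n : ℕ) (hn : A.dim c = n) :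
    (A.Ac c).lang = A.lang ∧
    (A.Ac c).bst n = A.bst n - 1 ∧
    (∀ k < n, (A.Ac c).bst k = A.bst k) ∧
    (∀ k, (A.Ac c).btt k = A.btt k) :=
  ⟨PAutomaton.Ac_lang_eq hA hc hbad,
   PAutomaton.Ac_bst_eq hA hg hns hc hbad hn,
   fun k hk => PAutomaton.Ac_bst_lt hA hc hn k hk,
   fun k => PAutomaton.Ac_btt_eq hA hc k⟩

end HDA
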